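/- For λ > 1, the function g(λ) = (λ+1)(λ−1)/(λ²+2λ−1), expressed as a proportion r(λ) = g(λ)/((λ−1)/λ) = λ(λ+1)/(λ²+2λ−1) of the biased voter survival probability, satisfies: r(λ) < 1 for all λ > 1, r(λ) → 1 as λ → 1⁺ and as λ → ∞, and r attains its minimum value (2+√2)/4 at λ = 1+√2. -/

import Mathlib

open Filter

/-- The survival probability `g(λ) = (λ+1)(λ−1)/(λ²+2λ−1)` of the one-dimensional
BD^f model, as a proportion `r(λ) = g(λ)/((λ−1)/λ) = λ(λ+1)/(λ²+2λ−1)` of the biased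
voter survival probability, satisfies `r < 1` on `(1,∞)`, `r → 1` as `λ → 1⁺` and as
`λ → ∞`, and attains its minimum value `(2+√2)/4` at `λ = 1+√2`. -/
theorem stmt_18 :
    (∀ lam : ℝ, 1 < lam →
      ((lam + 1) * (lam - 1) / (lam ^ 2 + 2 * lam - 1)) / ((lam - 1) / lam) =
        lam * (lam + 1) / (lam ^ 2 + 2 * lam - 1)) ∧
    (∀ lam : ℝ, 1 < lam → lam * (lam + 1) / (lam ^ 2 + 2 * lam - 1) < 1) ∧
    Tendsto (fun lam : ℝ => lam * (lam + 1) / (lam ^ 2 + 2 * lam - 1))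
      (nhdsWithin 1 (Set.Ioi 1)) (nhds 1) ∧
    Tendsto (fun lam : ℝ => lam * (lam + 1) / (lam ^ 2 + 2 * lam - 1))
      atTop (nhds 1) ∧
    (1 + Real.sqrt 2) * ((1 + Real.sqrt 2) + 1) /
        ((1 + Real.sqrt 2) ^ 2 + 2 * (1 + Real.sqrt 2) - 1) = (2 + Real.sqrt 2) / 4 ∧
    (∀ lam : ℝ, 1 < lam →
      (2 + Real.sqrt 2) / 4 ≤ lam * (lam + 1) / (lam ^ 2 + 2 * lam - 1)) := by
  have hden : ∀ lam : ℝ, 1 < lam → 0 < lam ^ 2 + 2 * lam - 1 := by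
    intro lam h; nlinarith
  refine ⟨?_, ?_, ?_, ?_, ?_, ?_⟩
  · intro lam h
    have h1 : lam - 1 ≠ 0 := by linarith
    have h2 : lam ≠ 0 := by positivity
    have h3 : lam ^ 2 + 2 * lam - 1 ≠ 0 := (hden lam h).ne'
    field_simp
  · intro lam h
    rw [div_lt_one (hden lam h)]
    nlinarith
  · have hc : ContinuousAt (fun lam : ℝ => lam * (lam + 1) / (lam ^ 2 + 2 * lam - 1)) 1 := by
      apply ContinuousAt.div
      · fun_prop
      · fun_prop
      · norm_num
    have := hc.tendsto
    simp only [show (1:ℝ) * (1 + 1) / ((1:ℝ) ^ 2 + 2 * 1 - 1) = 1 by norm_num] at this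
    exact this.mono_left nhdsWithin_le_nhds
  · have h1 : Tendsto (fun lam : ℝ => 1 / lam) atTop (nhds 0) := by
      simpa using tendsto_inv_atTop_zero
    have h2 : Tendsto (fun lam : ℝ => 1 / lam ^ 2) atTop (nhds 0) := by
      have := h1.mul h1
      simp only [mul_zero] at this
      refine this.congr fun x => ?_
      rw [div_mul_div_comm, one_mul, sq]
    have key : Tendsto (fun lam : ℝ => (1 + 1 / lam) / (1 + 2 / lam - 1 / lam ^ 2))
        atTop (nhds 1) := by
      have hnum : Tendsto (fun lam : ℝ => 1 + 1 / lam) atTop (nhds 1) := by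
        simpa using (tendsto_const_nhds.add h1)
      have hden2 : Tendsto (fun lam : ℝ => 1 + 2 / lam - 1 / lam ^ 2) atTop (nhds 1) := by
        have h3 : Tendsto (fun lam : ℝ => 2 / lam) atTop (nhds 0) := by
          have := h1.const_mul (2:ℝ)
          simpa [div_eq_mul_inv] using this
        simpa using (tendsto_const_nhds.add h3).sub h2
      have := hnum.div hden2 (by norm_num); rwa [div_one] at this
    refine key.congr' ?_
    filter_upwards [eventually_gt_atTop (1:ℝ)] with lam h
    have h2 : lam ≠ 0 := by positivity
    have h3 : lam ^ 2 + 2 * lam - 1 ≠ 0 := (hden lam h).ne'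
    have e2 : 1 + 2 / lam - 1 / lam ^ 2 = (lam ^ 2 + 2 * lam - 1) / lam ^ 2 := by
      field_simp
    have h4 : (1 : ℝ) + 2 / lam - 1 / lam ^ 2 ≠ 0 := by
      rw [e2]; positivity
    rw [div_eq_div_iff h4 h3]
    field_simp
  · have h2 : Real.sqrt 2 ^ 2 = 2 := Real.sq_sqrt (by norm_num)
    have hd : (1 + Real.sqrt 2) ^ 2 + 2 * (1 + Real.sqrt 2) - 1 ≠ 0 := by nlinarith [Real.sqrt_nonneg 2]
    rw [div_eq_div_iff hd (by norm_num)]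
    linear_combination (-(2 + Real.sqrt 2)) * h2
  · intro lam h
    have h2 : Real.sqrt 2 ^ 2 = 2 := Real.sq_sqrt (by norm_num)
    rw [div_le_div_iff₀ (by norm_num) (hden lam h)]
    nlinarith [sq_nonneg (lam - 1 - Real.sqrt 2), Real.sqrt_nonneg 2, Real.sq_sqrt (show (0:ℝ) ≤ 2 by norm_num)]
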